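/- For every countable linear order L, there exists an order-preserving embedding α : L → ℚ such that for every rational q not in the image of α, the set of elements of the image of α that are less than q either is empty or has a greatest element, and the set of elements of the image of α that are greater than q either is empty or has a least element. -/

import Mathlib

section Aux

variable (L : Type) [LinearOrder L]

/-- `x` is the top element or has a successor. -/
def HasSucc (x : L) : Prop := (∀ y, y ≤ x) ∨ ∃ s, x < s ∧ ∀ z, x < z → s ≤ z

/-- `x` is the bottom element or has a predecessor. -/
def HasPred (x : L) : Prop := (∀ y, x ≤ y) ∨ ∃ s, s < x ∧ ∀ z, z < x → z ≤ s

/-- The auxiliary order: marked points `(x,0)` together with fillers. -/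
abbrev M : Type :=
  {p : Lex (L × ℚ) // (ofLex p).2 = 0 ∨ (0 < (ofLex p).2 ∧ HasSucc L (ofLex p).1) ∨
    ((ofLex p).2 < 0 ∧ HasPred L (ofLex p).1)}

variable {L}

lemma Mlt {a b : M L} : a < b ↔ (ofLex a.1).1 < (ofLex b.1).1 ∨
    ((ofLex a.1).1 = (ofLex b.1).1 ∧ (ofLex a.1).2 < (ofLex b.1).2) :=
  (Subtype.coe_lt_coe).symm.trans Prod.Lex.lt_iff

instance [Countable L] : Countable (Lex (L × ℚ)) := by
  have : Countable (L × ℚ) := inferInstance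
  exact this

instance [Nonempty L] : Nonempty (M L) :=
  ⟨⟨toLex (Classical.arbitrary L, 0), Or.inl rfl⟩⟩

instance : NoMaxOrder (M L) := by
  constructor
  rintro ⟨p, hp⟩
  by_cases hs : HasSucc L (ofLex p).1
  · refine ⟨⟨toLex ((ofLex p).1, max (ofLex p).2 0 + 1), Or.inr (Or.inl ⟨?_, hs⟩)⟩,
      Mlt.mpr (Or.inr ⟨rfl, ?_⟩)⟩
    · have := le_max_right (ofLex p).2 0; simp only [ofLex_toLex]; linarith
    · have := le_max_left (ofLex p).2 0; simp only [ofLex_toLex]; linarith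
  · have h1 : ¬∀ y, y ≤ (ofLex p).1 := fun h => hs (Or.inl h)
    push_neg at h1
    obtain ⟨y, hy⟩ := h1
    exact ⟨⟨toLex (y, 0), Or.inl rfl⟩, Mlt.mpr (Or.inl hy)⟩

instance : NoMinOrder (M L) := by
  constructor
  rintro ⟨p, hp⟩
  by_cases hs : HasPred L (ofLex p).1
  · refine ⟨⟨toLex ((ofLex p).1, min (ofLex p).2 0 - 1), Or.inr (Or.inr ⟨?_, hs⟩)⟩,
      Mlt.mpr (Or.inr ⟨rfl, ?_⟩)⟩
    · have := min_le_right (ofLex p).2 0; simp only [ofLex_toLex]; linarith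
    · have := min_le_left (ofLex p).2 0; simp only [ofLex_toLex]; linarith
  · have h1 : ¬∀ y, (ofLex p).1 ≤ y := fun h => hs (Or.inl h)
    push_neg at h1
    obtain ⟨y, hy⟩ := h1
    exact ⟨⟨toLex (y, 0), Or.inl rfl⟩, Mlt.mpr (Or.inl hy)⟩

instance : DenselyOrdered (M L) := by
  constructor
  rintro ⟨p, hp⟩ ⟨s, hs⟩ h
  rw [Mlt] at h
  rcases h with hxy | ⟨hxy, hqr⟩
  · by_cases hz : ∃ z, (ofLex p).1 < z ∧ z < (ofLex s).1
    · obtain ⟨z, hz1, hz2⟩ := hz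
      exact ⟨⟨toLex (z, 0), Or.inl rfl⟩, Mlt.mpr (Or.inl hz1), Mlt.mpr (Or.inl hz2)⟩
    · have hsucc : HasSucc L (ofLex p).1 :=
        Or.inr ⟨(ofLex s).1, hxy, fun z hzz => le_of_not_gt fun hlt => hz ⟨z, hzz, hlt⟩⟩
      refine ⟨⟨toLex ((ofLex p).1, max (ofLex p).2 0 + 1), Or.inr (Or.inl ⟨?_, hsucc⟩)⟩,
        Mlt.mpr (Or.inr ⟨rfl, ?_⟩), Mlt.mpr (Or.inl ?_)⟩
      · have := le_max_right (ofLex p).2 0; simp only [ofLex_toLex]; linarith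
      · have := le_max_left (ofLex p).2 0; simp only [ofLex_toLex]; linarith
      · simpa using hxy
  · rcases le_or_gt 0 (ofLex p).2 with hq0 | hq0
    · have hr0 : (0:ℚ) < (ofLex s).2 := lt_of_le_of_lt hq0 hqr
      have hsucc : HasSucc L (ofLex s).1 := by
        rcases hs with h0 | ⟨_, h⟩ | ⟨hneg, _⟩
        · exact absurd h0 (by linarith)
        · exact h
        · exact absurd hneg (by linarith)
      refine ⟨⟨toLex ((ofLex p).1, ((ofLex p).2 + (ofLex s).2) / 2),
        Or.inr (Or.inl ⟨by simp only [ofLex_toLex]; linarith, hxy ▸ hsucc⟩)⟩,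
        Mlt.mpr (Or.inr ⟨rfl, by simp only [ofLex_toLex]; linarith⟩),
        Mlt.mpr (Or.inr ⟨hxy, by simp only [ofLex_toLex]; linarith⟩)⟩
    · rcases lt_or_ge 0 (ofLex s).2 with hr0 | hr0
      · exact ⟨⟨toLex ((ofLex p).1, 0), Or.inl rfl⟩,
          Mlt.mpr (Or.inr ⟨rfl, by simpa using hq0⟩),
          Mlt.mpr (Or.inr ⟨hxy, by simpa using hr0⟩)⟩
      · have hpred : HasPred L (ofLex p).1 := by
          rcases hp with h0 | ⟨hpos, _⟩ | ⟨_, h⟩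
          · exact absurd h0 (by linarith)
          · exact absurd hpos (by linarith)
          · exact h
        refine ⟨⟨toLex ((ofLex p).1, ((ofLex p).2 + (ofLex s).2) / 2),
          Or.inr (Or.inr ⟨by simp only [ofLex_toLex]; linarith, hpred⟩)⟩,
          Mlt.mpr (Or.inr ⟨rfl, by simp only [ofLex_toLex]; linarith⟩),
          Mlt.mpr (Or.inr ⟨hxy, by simp only [ofLex_toLex]; linarith⟩)⟩

end Aux

/-- For every countable linear order `L` there is an order embedding into `ℚ` such that
every rational outside the image has a greatest image-point below it (if any) and a least
image-point above it (if any). -/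
theorem stmt0 (L : Type) [LinearOrder L] [Countable L] :
    ∃ α : L ↪o ℚ, ∀ q : ℚ, q ∉ Set.range α →
      ({p ∈ Set.range ⇑α | p < q} = ∅ ∨
        ∃ m ∈ {p ∈ Set.range ⇑α | p < q}, ∀ x ∈ {p ∈ Set.range ⇑α | p < q}, x ≤ m) ∧
      ({p ∈ Set.range ⇑α | q < p} = ∅ ∨
        ∃ m ∈ {p ∈ Set.range ⇑α | q < p}, ∀ x ∈ {p ∈ Set.range ⇑α | q < p}, m ≤ x) := by
  rcases isEmpty_or_nonempty L with hL | hL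
  · refine ⟨OrderEmbedding.ofStrictMono (fun x => (isEmptyElim x : ℚ))
      (fun x => isEmptyElim x), fun q _ => ⟨Or.inl ?_, Or.inl ?_⟩⟩ <;>
    · refine Set.eq_empty_iff_forall_notMem.mpr fun p hp => ?_
      obtain ⟨⟨y, _⟩, _⟩ := hp
      exact isEmptyElim y
  · obtain ⟨e⟩ := Order.iso_of_countable_dense (M L) ℚ
    have hsm : StrictMono (fun x : L => e ⟨toLex (x, 0), Or.inl rfl⟩) := by
      intro a b h
      exact e.strictMono (Mlt.mpr (Or.inl h))
    refine ⟨OrderEmbedding.ofStrictMono _ hsm, ?_⟩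
    intro q hq
    set m : M L := e.symm q with hm
    rcases hxr : ofLex (m.1) with ⟨x, r⟩
    have hm1 : m.1 = toLex (x, r) := by rw [← hxr, toLex_ofLex]
    have heq : e m = q := e.apply_symm_apply q
    have hf : ∀ y : L, (OrderEmbedding.ofStrictMono _ hsm : L ↪o ℚ) y
        = e ⟨toLex (y, 0), Or.inl rfl⟩ := fun y => rfl
    have hlt : ∀ y : L, e ⟨toLex (y, 0), Or.inl rfl⟩ < q ↔ (y < x ∨ (y = x ∧ (0:ℚ) < r)) := by
      intro y
      rw [← heq, e.lt_iff_lt, Mlt, hxr]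
      simp
    have hgt : ∀ y : L, q < e ⟨toLex (y, 0), Or.inl rfl⟩ ↔ (x < y ∨ (x = y ∧ r < 0)) := by
      intro y
      rw [← heq, e.lt_iff_lt, Mlt, hxr]
      simp
    have hr0 : r ≠ 0 := by
      intro h
      apply hq
      refine ⟨x, ?_⟩
      have : (⟨toLex (x, 0), Or.inl rfl⟩ : M L) = m := Subtype.ext (by rw [hm1, h])
      rw [hf, this, heq]
    have hm2 := m.2
    rw [hxr] at hm2
    simp only at hm2
    rcases hm2 with h0 | ⟨hrpos, hsucc⟩ | ⟨hrneg, hpred⟩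
    · exact absurd h0 hr0
    · -- r > 0 : max below is α x; min above via successor of x
      constructor
      · right
        refine ⟨_, ⟨⟨x, rfl⟩, (hlt x).2 (Or.inr ⟨rfl, hrpos⟩)⟩, ?_⟩
        rintro p ⟨⟨y, rfl⟩, hpq⟩
        have hyx : y ≤ x := by
          rcases (hlt y).1 hpq with h | ⟨h, _⟩
          · exact h.le
          · exact h.le
        exact hsm.monotone hyx
      · rcases hsucc with hall | ⟨s, hxs, hsmin⟩
        · left
          refine Set.eq_empty_iff_forall_notMem.mpr ?_
          rintro p ⟨⟨y, rfl⟩, hqy⟩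
          rcases (hgt y).1 hqy with h | ⟨_, h⟩
          · exact absurd (hall y) (not_le.mpr h)
          · linarith
        · right
          refine ⟨_, ⟨⟨s, rfl⟩, (hgt s).2 (Or.inl hxs)⟩, ?_⟩
          rintro p ⟨⟨y, rfl⟩, hqy⟩
          rcases (hgt y).1 hqy with h | ⟨_, h⟩
          · exact hsm.monotone (hsmin y h)
          · linarith
    · -- r < 0 : min above is α x; max below via predecessor of x
      constructor
      · rcases hpred with hall | ⟨s, hxs, hsmax⟩
        · left
          refine Set.eq_empty_iff_forall_notMem.mpr ?_
          rintro p ⟨⟨y, rfl⟩, hqy⟩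
          rcases (hlt y).1 hqy with h | ⟨_, h⟩
          · exact absurd (hall y) (not_le.mpr h)
          · linarith
        · right
          refine ⟨_, ⟨⟨s, rfl⟩, (hlt s).2 (Or.inl hxs)⟩, ?_⟩
          rintro p ⟨⟨y, rfl⟩, hqy⟩
          rcases (hlt y).1 hqy with h | ⟨_, h⟩
          · exact hsm.monotone (hsmax y h)
          · linarith
      · right
        refine ⟨_, ⟨⟨x, rfl⟩, (hgt x).2 (Or.inr ⟨rfl, hrneg⟩)⟩, ?_⟩
        rintro p ⟨⟨y, rfl⟩, hqy⟩
        have hxy : x ≤ y := by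
          rcases (hgt y).1 hqy with h | ⟨h, _⟩
          · exact h.le
          · exact h.le
        exact hsm.monotone hxy
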